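/- arXiv:2411.06646 — 5 statements merged into one kernel-verified Lean document; each statement's English description precedes it below -/
import Mathlib

section
/- Interaction Lemma: Let d_embd = 5, let l ≥ 2 be an integer, let 1 ≤ t1, t2 ≤ l and 1 ≤ i ≤ 5, and let kappa, M ≥ 1. For 1 ≤ t ≤ l define the interaction vector I_t = (cos(t·pi/(2l)), sin(t·pi/(2l))) in R^2. Let Q^B, K^B in R^{2×5} have all entries bounded in absolute value by kappa. Then there exist matrices Q, K, V in R^{5×5}, all of whose entries are bounded in absolute value by C·kappa^2·M^2·l^2 for an absolute constant C, such that for every matrix H in R^{5×l} with ||H||_∞ ≤ M whose t-th column h_t satisfies (h_t^3, h_t^4) = I_t and h_t^5 = 1 for all t, the ReLU attention head A with parameters Q, K, V satisfies: the t1-th column of A(H) equals sigma(⟨Q^B h_{t1}, K^B h_{t2}⟩)·e_i, and the t-th column of A(H) is the zero vector for every t ≠ t1. Here e_i is the i-th standard basis vector of R^5 and sigma(t) = max(0,t). -/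
open Matrix Finset Real MeasureTheory

noncomputable section

/-- The ReLU activation function. -/
def relu (t : ℝ) : ℝ := max 0 t

/-- A ReLU attention head with query, key and value matrices `Q K V`, acting on an
embedding matrix `H ∈ ℝ^{de × l}`:  the `i`-th column of `A(H)` is
`∑ j σ(⟨Q h_i, K h_j⟩) V h_j`. -/
def attnHead {de l : ℕ} (Q K V : Matrix (Fin de) (Fin de) ℝ)
    (H : Matrix (Fin de) (Fin l) ℝ) : Matrix (Fin de) (Fin l) ℝ :=
  Matrix.of fun a i => ∑ j : Fin l,
    relu (∑ b : Fin de, Q.mulVec (fun c => H c i) b * K.mulVec (fun c => H c j) b) *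
      V.mulVec (fun c => H c j) a

/-- Multi-headed attention layer with `m` heads. -/
def mha {de l : ℕ} (m : ℕ) (Q K V : ℕ → Matrix (Fin de) (Fin de) ℝ)
    (H : Matrix (Fin de) (Fin l) ℝ) : Matrix (Fin de) (Fin l) ℝ :=
  ∑ j ∈ Finset.range m, attnHead (Q j) (K j) (V j) H


lemma cos_small (l : ℕ) (hl : 2 ≤ l) : Real.cos (Real.pi / (2*l)) ≤ 1 - 1/(2*(l:ℝ)^2) := by
  have hL : (2:ℝ) ≤ (l:ℝ) := by exact_mod_cast hl
  set X := Real.pi / (2*(l:ℝ)) with hXdef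
  have hLpos : (0:ℝ) < l := by linarith
  have hXpos : 0 < X := by positivity
  have hX2 : X ≤ 1 := by
    rw [hXdef, div_le_one (by linarith)]
    nlinarith [Real.pi_le_four]
  have h3 : 3 ≤ 2*(l:ℝ)*X := by
    rw [hXdef]
    rw [mul_div_cancel₀ _ (by positivity : (2:ℝ)*(l:ℝ) ≠ 0)]
    linarith [Real.pi_gt_three]
  have hsin := Real.sin_gt_sub_cube (by positivity : 0 < X/2)
  have hcos : Real.cos X = 1 - 2 * Real.sin (X/2)^2 := by
    have h1 := Real.cos_two_mul (X/2)
    have h2 := Real.sin_sq_add_cos_sq (X/2)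
    rw [show 2*(X/2) = X by ring] at h1
    linarith
  have hXX : X*X ≤ 1 := by nlinarith
  have hq : (15/32)*X ≤ X/2 - (X/2)^3/4 := by nlinarith
  have hs : (15/32)*X ≤ Real.sin (X/2) := by linarith [pow_pos (half_pos hXpos) 3]
  have hs2 : ((15/32)*X)^2 ≤ Real.sin (X/2)^2 := by
    apply sq_le_sq' <;> nlinarith
  rw [hcos]
  have key : 1/(2*(l:ℝ)^2) ≤ 2 * ((15/32)*X)^2 := by
    rw [div_le_iff₀ (by positivity)]
    nlinarith
  linarith

lemma cos_gap (l : ℕ) (hl : 2 ≤ l) (a b : Fin l) (hab : a ≠ b) :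
    Real.cos ((((a:ℕ):ℝ)+1) * Real.pi / (2*(l:ℝ)) - (((b:ℕ):ℝ)+1) * Real.pi / (2*(l:ℝ))) ≤ 1 - 1/(2*(l:ℝ)^2) := by
  have hL : (2:ℝ) ≤ (l:ℝ) := by exact_mod_cast hl
  have hLpos : (0:ℝ) < l := by linarith
  set X := Real.pi / (2*(l:ℝ)) with hXdef
  have hXpos : 0 < X := by positivity
  set D := |((a:ℕ):ℝ) - ((b:ℕ):ℝ)| with hDdef
  have harg : (((a:ℕ):ℝ)+1) * Real.pi / (2*(l:ℝ)) - (((b:ℕ):ℝ)+1) * Real.pi / (2*(l:ℝ))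
      = (((a:ℕ):ℝ) - ((b:ℕ):ℝ)) * X := by rw [hXdef]; ring
  have hD1 : 1 ≤ D := by
    have hne : (a:ℕ) ≠ (b:ℕ) := fun h => hab (Fin.ext h)
    have h1 : (1:ℤ) ≤ |((a:ℕ):ℤ) - ((b:ℕ):ℤ)| := by
      apply Int.one_le_abs; omega
    have h2 : (1:ℝ) ≤ |((((a:ℕ):ℤ) - ((b:ℕ):ℤ) : ℤ) : ℝ)| := by exact_mod_cast h1
    push_cast at h2
    rw [hDdef]; convert h2 using 2
  have hDl : D ≤ (l:ℝ) := by
    have ha : ((a:ℕ):ℝ) < l := by exact_mod_cast a.isLt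
    have hb : ((b:ℕ):ℝ) < l := by exact_mod_cast b.isLt
    have ha0 : (0:ℝ) ≤ ((a:ℕ):ℝ) := by positivity
    have hb0 : (0:ℝ) ≤ ((b:ℕ):ℝ) := by positivity
    rw [hDdef, abs_le]; constructor <;> linarith
  rw [harg, ← Real.cos_abs, abs_mul, abs_of_pos hXpos, ← hDdef]
  have step : Real.cos (D * X) ≤ Real.cos X := by
    apply Real.cos_le_cos_of_nonneg_of_le_pi (le_of_lt hXpos)
    · calc D * X ≤ (l:ℝ) * X := by nlinarith
        _ = Real.pi/2 := by rw [hXdef]; field_simp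
        _ ≤ Real.pi := by linarith [Real.pi_pos]
    · nlinarith
  exact step.trans (cos_small l hl)

lemma if_abs_bound (lam x y : ℝ) (hx : |x| ≤ 1) (hy : |y| ≤ 1) (hlam : 1 ≤ lam) (b : Fin 5) :
    |if b = 2 then lam * x else if b = 3 then lam * y else if b = 4 then -lam else 0| ≤ lam := by
  have h0 : (0:ℝ) < lam := by linarith
  split_ifs
  · rw [abs_mul, abs_of_pos h0]; nlinarith [abs_nonneg x]
  · rw [abs_mul, abs_of_pos h0]; nlinarith [abs_nonneg y]
  · rw [abs_neg, abs_of_pos h0]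
  · simpa using h0.le

lemma if_abs_bound' (lam : ℝ) (hlam : 1 ≤ lam) (b : Fin 5) :
    |if b = 4 then (1:ℝ) else 0| ≤ lam := by
  split_ifs
  · rwa [abs_one]
  · simpa using by linarith

set_option maxHeartbeats 1000000 in
/-- **Interaction Lemma**: with `d_embd = 5`, structured tokens carrying interaction
vectors `I_t = (cos(tπ/(2l)), sin(tπ/(2l)))` in rows 3-4 and a constant `1` in row 5,
any data kernel `B(h, h') = σ(⟨Q^B h, K^B h'⟩)` can be realized by a single attention
head acting only between tokens `t₁` and `t₂`, writing the result in row `i` of column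
`t₁` and zero elsewhere, with weights of size `O(κ²M²l²)`. -/
theorem interaction_lemma :
    ∃ C : ℝ, 0 < C ∧
      ∀ (l : ℕ), 2 ≤ l →
        ∀ (t₁ t₂ : Fin l) (i : Fin 5) (κ M : ℝ), 1 ≤ κ → 1 ≤ M →
          ∀ QB KB : Matrix (Fin 2) (Fin 5) ℝ,
            (∀ a b, |QB a b| ≤ κ) → (∀ a b, |KB a b| ≤ κ) →
            ∃ Q K V : Matrix (Fin 5) (Fin 5) ℝ,
              (∀ a b, |Q a b| ≤ C * κ ^ 2 * M ^ 2 * l ^ 2) ∧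
              (∀ a b, |K a b| ≤ C * κ ^ 2 * M ^ 2 * l ^ 2) ∧
              (∀ a b, |V a b| ≤ C * κ ^ 2 * M ^ 2 * l ^ 2) ∧
              ∀ H : Matrix (Fin 5) (Fin l) ℝ,
                (∀ a t, |H a t| ≤ M) →
                (∀ t : Fin l,
                  H 2 t = Real.cos (((t : ℕ) + 1) * Real.pi / (2 * l)) ∧
                  H 3 t = Real.sin (((t : ℕ) + 1) * Real.pi / (2 * l)) ∧
                  H 4 t = 1) →
                (∀ a, attnHead Q K V H a t₁ =
                  if a = i then
                    relu (∑ b : Fin 2,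
                      QB.mulVec (fun c => H c t₁) b * KB.mulVec (fun c => H c t₂) b)
                  else 0) ∧
                (∀ t : Fin l, t ≠ t₁ → ∀ a, attnHead Q K V H a t = 0) := by
  refine ⟨200, by norm_num, ?_⟩
  intro l hl t₁ t₂ i κ M hκ hM QB KB hQB hKB
  have hL : (2:ℝ) ≤ (l:ℝ) := by exact_mod_cast hl
  have hκ0 : (0:ℝ) < κ := by linarith
  have hM0 : (0:ℝ) < M := by linarith
  set lam : ℝ := 200 * κ^2 * M^2 * (l:ℝ)^2 with hlamdef
  have hlam_pos : 0 < lam := by positivity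
  have hκ2 : (1:ℝ) ≤ κ^2 := by nlinarith
  have hM2 : (1:ℝ) ≤ M^2 := by nlinarith
  have hl2 : (1:ℝ) ≤ (l:ℝ)^2 := by nlinarith
  have hMl2 : (1:ℝ) ≤ M^2*(l:ℝ)^2 := by nlinarith
  have hκMl2 : κ^2 ≤ κ^2*(M^2*(l:ℝ)^2) := le_mul_of_one_le_right (by positivity) hMl2
  have hlam_ge : 200 ≤ lam := by rw [hlamdef]; nlinarith
  set θ : Fin l → ℝ := fun t => (((t:ℕ):ℝ)+1) * Real.pi / (2*(l:ℝ)) with hθdef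
  set Q : Matrix (Fin 5) (Fin 5) ℝ := Matrix.of fun a c =>
    if a = 0 then QB 0 c else if a = 1 then QB 1 c else
    if a = 2 then (if c = 2 then lam * Real.cos (θ t₁) else if c = 3 then lam * Real.sin (θ t₁)
                   else if c = 4 then -lam else 0) else
    if a = 3 then (if c = 4 then 1 else 0) else 0 with hQdef
  set K : Matrix (Fin 5) (Fin 5) ℝ := Matrix.of fun a c =>
    if a = 0 then KB 0 c else if a = 1 then KB 1 c else
    if a = 2 then (if c = 4 then 1 else 0) else
    if a = 3 then (if c = 2 then lam * Real.cos (θ t₂) else if c = 3 then lam * Real.sin (θ t₂)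
                   else if c = 4 then -lam else 0) else 0 with hKdef
  set V : Matrix (Fin 5) (Fin 5) ℝ := Matrix.of fun a c =>
    if a = i ∧ c = 4 then 1 else 0 with hVdef
  have habs_lam : ∀ x : ℝ, |x| ≤ 1 → |lam * x| ≤ lam := by
    intro x hx
    rw [abs_mul, abs_of_pos hlam_pos]
    nlinarith [abs_nonneg x]
  have hκlam : κ ≤ lam := by rw [hlamdef]; nlinarith
  have h1lam : (1:ℝ) ≤ lam := by linarith
  have hbound : (∀ a b, |Q a b| ≤ 200 * κ ^ 2 * M ^ 2 * (l:ℝ) ^ 2) ∧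
      (∀ a b, |K a b| ≤ 200 * κ ^ 2 * M ^ 2 * (l:ℝ) ^ 2) := by
    constructor <;> intro a b <;>
    · rw [← hlamdef]
      fin_cases a <;>
        simp only [hQdef, hKdef, Matrix.of_apply, if_true, if_false, Fin.isValue] <;>
        norm_num <;>
      first
        | exact (hQB _ _).trans hκlam
        | exact (hKB _ _).trans hκlam
        | exact if_abs_bound lam _ _ (Real.abs_cos_le_one _) (Real.abs_sin_le_one _) h1lam b
        | exact if_abs_bound' lam h1lam b
        | simpa using hlam_pos.le
  refine ⟨Q, K, V, hbound.1, hbound.2, ?_, ?_⟩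
  · intro a b
    simp only [hVdef, Matrix.of_apply]
    split_ifs
    · rwa [abs_one]
    · simpa using hlam_pos.le
  intro H hMH hH
  have hHc : ∀ t : Fin l, H 2 t = Real.cos (θ t) := by
    intro t; rw [(hH t).1, hθdef]
  have hHs : ∀ t : Fin l, H 3 t = Real.sin (θ t) := by
    intro t; rw [(hH t).2.1, hθdef]
  have hH4 : ∀ t : Fin l, H 4 t = 1 := fun t => (hH t).2.2
  have hS : ∀ t j : Fin l,
      (∑ b : Fin 5, Q.mulVec (fun c => H c t) b * K.mulVec (fun c => H c j) b)
      = (∑ b : Fin 2, QB.mulVec (fun c => H c t) b * KB.mulVec (fun c => H c j) b)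
        + lam * (Real.cos (θ t₁ - θ t) - 1) + lam * (Real.cos (θ t₂ - θ j) - 1) := by
    intro t j
    simp only [Matrix.mulVec, dotProduct, hQdef, hKdef, Matrix.of_apply,
      Fin.sum_univ_five, Fin.sum_univ_two]
    simp only [Fin.reduceEq, reduceIte, if_true, if_false]
    rw [hHc t, hHc j, hHs t, hHs j, hH4 t, hH4 j, Real.cos_sub, Real.cos_sub]
    ring
  have hQb : ∀ (b : Fin 2) (t : Fin l), |QB.mulVec (fun c => H c t) b| ≤ 5*(κ*M) := by
    intro b t
    have h1 : |∑ c : Fin 5, QB b c * H c t| ≤ ∑ c : Fin 5, |QB b c * H c t| :=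
      Finset.abs_sum_le_sum_abs _ _
    have h2 : ∑ c : Fin 5, |QB b c * H c t| ≤ ∑ _c : Fin 5, κ * M :=
      Finset.sum_le_sum (fun c _ => by
        rw [abs_mul]
        exact mul_le_mul (hQB b c) (hMH c t) (abs_nonneg _) hκ0.le)
    have h3 : ∑ _c : Fin 5, κ * M = 5*(κ*M) := by
      simp [Finset.sum_const]
    have := h1.trans (h2.trans_eq h3)
    simpa [Matrix.mulVec, dotProduct] using this
  have hKb : ∀ (b : Fin 2) (t : Fin l), |KB.mulVec (fun c => H c t) b| ≤ 5*(κ*M) := by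
    intro b t
    have h1 : |∑ c : Fin 5, KB b c * H c t| ≤ ∑ c : Fin 5, |KB b c * H c t| :=
      Finset.abs_sum_le_sum_abs _ _
    have h2 : ∑ c : Fin 5, |KB b c * H c t| ≤ ∑ _c : Fin 5, κ * M :=
      Finset.sum_le_sum (fun c _ => by
        rw [abs_mul]
        exact mul_le_mul (hKB b c) (hMH c t) (abs_nonneg _) hκ0.le)
    have h3 : ∑ _c : Fin 5, κ * M = 5*(κ*M) := by
      simp [Finset.sum_const]
    have := h1.trans (h2.trans_eq h3)
    simpa [Matrix.mulVec, dotProduct] using this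
  have hBb : ∀ t j : Fin l,
      |∑ b : Fin 2, QB.mulVec (fun c => H c t) b * KB.mulVec (fun c => H c j) b|
        ≤ 50*(κ^2*M^2) := by
    intro t j
    rw [Fin.sum_univ_two]
    have p0 : |QB.mulVec (fun c => H c t) 0 * KB.mulVec (fun c => H c j) 0| ≤ 25*(κ^2*M^2) := by
      rw [abs_mul]
      nlinarith [hQb 0 t, hKb 0 j, abs_nonneg (QB.mulVec (fun c => H c t) 0),
        abs_nonneg (KB.mulVec (fun c => H c j) 0), hκ0, hM0]
    have p1 : |QB.mulVec (fun c => H c t) 1 * KB.mulVec (fun c => H c j) 1| ≤ 25*(κ^2*M^2) := by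
      rw [abs_mul]
      nlinarith [hQb 1 t, hKb 1 j, abs_nonneg (QB.mulVec (fun c => H c t) 1),
        abs_nonneg (KB.mulVec (fun c => H c j) 1), hκ0, hM0]
    exact (abs_add_le _ _).trans (by linarith)
  have hgap : ∀ (s t : Fin l), s ≠ t → lam * (Real.cos (θ s - θ t) - 1) ≤ -(100*(κ^2*M^2)) := by
    intro s t hst
    have h := cos_gap l hl s t hst
    have h' : Real.cos (θ s - θ t) - 1 ≤ -(1/(2*(l:ℝ)^2)) := by
      rw [hθdef]; simp only; linarith [h]
    have e : lam * (1/(2*(l:ℝ)^2)) = 100*(κ^2*M^2) := by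
      rw [hlamdef]; field_simp; ring
    calc lam * (Real.cos (θ s - θ t) - 1) ≤ lam * (-(1/(2*(l:ℝ)^2))) :=
          mul_le_mul_of_nonneg_left h' hlam_pos.le
      _ = -(100*(κ^2*M^2)) := by rw [mul_neg, e]
  have hgap0 : ∀ (s t : Fin l), lam * (Real.cos (θ s - θ t) - 1) ≤ 0 :=
    fun s t => mul_nonpos_of_nonneg_of_nonpos hlam_pos.le
      (by linarith [Real.cos_le_one (θ s - θ t)])
  have hS0 : ∀ t j : Fin l, (t ≠ t₁ ∨ j ≠ t₂) →
      relu (∑ b : Fin 5, Q.mulVec (fun c => H c t) b * K.mulVec (fun c => H c j) b) = 0 := by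
    intro t j htj
    apply max_eq_left
    rw [hS t j]
    have hB := hBb t j
    have hB' := abs_le.1 hB
    have hx : (0:ℝ) ≤ κ^2*M^2 := by positivity
    rcases htj with ht | hj
    · have g1 := hgap t₁ t (fun h => ht h.symm)
      have g2 := hgap0 t₂ j
      linarith
    · have g1 := hgap t₂ j (fun h => hj h.symm)
      have g2 := hgap0 t₁ t
      linarith
  have hVv : ∀ (j : Fin l) (a : Fin 5),
      V.mulVec (fun c => H c j) a = if a = i then 1 else 0 := by
    intro j a
    simp only [Matrix.mulVec, dotProduct, hVdef, Matrix.of_apply, Fin.sum_univ_five]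
    norm_num [Fin.reduceEq, hH4 j] <;> simp
  constructor
  · intro a
    have key : ∀ j : Fin l,
        relu (∑ b : Fin 5, Q.mulVec (fun c => H c t₁) b * K.mulVec (fun c => H c j) b) *
          V.mulVec (fun c => H c j) a
        = if j = t₂ then
            (if a = i then relu (∑ b : Fin 2,
              QB.mulVec (fun c => H c t₁) b * KB.mulVec (fun c => H c t₂) b) else 0)
          else 0 := by
      intro j
      by_cases hj : j = t₂
      · subst hj
        rw [if_pos rfl, hVv j a]
        have hSe : (∑ b : Fin 5, Q.mulVec (fun c => H c t₁) b * K.mulVec (fun c => H c j) b)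
            = ∑ b : Fin 2, QB.mulVec (fun c => H c t₁) b * KB.mulVec (fun c => H c j) b := by
          rw [hS t₁ j, sub_self, sub_self, Real.cos_zero]
          ring
        rw [hSe]
        split_ifs <;> ring
      · rw [if_neg hj, hS0 t₁ j (Or.inr hj), zero_mul]
    show (∑ j : Fin l, relu (∑ b : Fin 5,
        Q.mulVec (fun c => H c t₁) b * K.mulVec (fun c => H c j) b) *
        V.mulVec (fun c => H c j) a) = _
    rw [Finset.sum_congr rfl (fun j _ => key j), Finset.sum_ite_eq' Finset.univ t₂]
    simp
  · intro t ht a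
    show (∑ j : Fin l, relu (∑ b : Fin 5,
        Q.mulVec (fun c => H c t) b * K.mulVec (fun c => H c j) b) *
        V.mulVec (fun c => H c j) a) = 0
    apply Finset.sum_eq_zero
    intro j _
    rw [hS0 t j (Or.inl ht), zero_mul]


end
end

section
/- Gating feed-forward network lemma: Let d_embd = 5, let l ≥ 2 be an integer, let 1 ≤ k ≤ l, and let M > 0. For 1 ≤ t ≤ l define the interaction vector I_t = (cos(t·pi/(2l)), sin(t·pi/(2l))) in R^2. There exists a two-layer ReLU feed-forward network FFN : R^5 → R^5 of constant width, whose weight parameters are bounded in absolute value by C·l·M for an absolute constant C, such that for every matrix H in R^{5×l} with ||H||_∞ ≤ M whose t-th column h_t satisfies (h_t^3, h_t^4) = I_t and h_t^5 = 1 for all t, one has FFN(h_t) = h_t for all t ≤ k, and FFN(h_t) = (0, 0, I_t^1, I_t^2, 1)^T for all t > k. -/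
open Matrix Finset Real

noncomputable section

lemma sin_lb (l : ℕ) (hl : 2 ≤ l) {x : ℝ} (h1 : π/(4*l) ≤ x) (h2 : x ≤ π/2) :
    1/(2*(l:ℝ)) ≤ Real.sin x := by
  have hπ := Real.pi_pos
  have hl0 : (2:ℝ) ≤ l := by exact_mod_cast hl
  have h0 : 0 ≤ x := le_trans (by positivity) h1
  have hm := Real.mul_le_sin h0 h2
  have : 1/(2*(l:ℝ)) = 2/π * (π/(4*l)) := by field_simp; ring
  rw [this]
  calc 2/π * (π/(4*(l:ℝ))) ≤ 2/π * x := by gcongr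
    _ ≤ sin x := hm

lemma gate_bound (l k t : ℕ) (hl : 2 ≤ l) (hk1 : 1 ≤ k) (hkl : k ≤ l) (ht : t < l) :
    (t + 1 ≤ k → 1/(2*(l:ℝ)) ≤ Real.sin (((k:ℝ)+1/2)*π/(2*l)) * Real.cos (((t:ℝ)+1)*π/(2*l))
        - Real.cos (((k:ℝ)+1/2)*π/(2*l)) * Real.sin (((t:ℝ)+1)*π/(2*l))) ∧
    (k < t + 1 → Real.sin (((k:ℝ)+1/2)*π/(2*l)) * Real.cos (((t:ℝ)+1)*π/(2*l))
        - Real.cos (((k:ℝ)+1/2)*π/(2*l)) * Real.sin (((t:ℝ)+1)*π/(2*l)) ≤ -(1/(2*(l:ℝ)))) := by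
  have hπ := Real.pi_pos
  have hl0 : (2:ℝ) ≤ l := by exact_mod_cast hl
  have hlpos : (0:ℝ) < l := by linarith
  have hkl' : (k:ℝ) ≤ l := by exact_mod_cast hkl
  have hk1' : (1:ℝ) ≤ k := by exact_mod_cast hk1
  have ht' : (t:ℝ) + 1 ≤ l := by exact_mod_cast ht
  have hfrac : ∀ a b : ℝ, a ≤ b → a*π/(2*(l:ℝ)) ≤ b*π/(2*l) := by
    intro a b hab; gcongr
  have hq : π/(4*(l:ℝ)) = (1/2)*π/(2*l) := by ring
  have hh : π/2 = (l:ℝ)*π/(2*l) := by field_simp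
  have key : ∀ x : ℝ, Real.sin (((k:ℝ)+1/2)*π/(2*l)) * Real.cos (x)
      - Real.cos (((k:ℝ)+1/2)*π/(2*l)) * Real.sin x = Real.sin (((k:ℝ)+1/2)*π/(2*l) - x) := by
    intro x; rw [Real.sin_sub]
  constructor
  · intro htk
    have htk' : (t:ℝ) + 1 ≤ k := by exact_mod_cast htk
    rw [key]
    have hd : ((k:ℝ)+1/2)*π/(2*l) - ((t:ℝ)+1)*π/(2*l) = ((k:ℝ)+1/2-((t:ℝ)+1))*π/(2*l) := by
      ring
    rw [hd]
    apply sin_lb l hl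
    · rw [hq]; exact hfrac _ _ (by linarith)
    · rw [hh]; exact hfrac _ _ (by linarith)
  · intro htk
    have htk' : (k:ℝ) + 1 ≤ t + 1 := by exact_mod_cast htk
    rw [key]
    have hd : ((k:ℝ)+1/2)*π/(2*l) - ((t:ℝ)+1)*π/(2*l) = -((((t:ℝ)+1)-((k:ℝ)+1/2))*π/(2*l)) := by
      ring
    rw [hd, Real.sin_neg, neg_le_neg_iff]
    apply sin_lb l hl
    · rw [hq]; exact hfrac _ _ (by linarith)
    · rw [hh]; exact hfrac _ _ (by linarith)

lemma fin7_5 : (5 : Fin 7) = (4 : Fin 6).succ := rfl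
lemma fin7_6 : (6 : Fin 7) = (5 : Fin 6).succ := rfl
lemma fin6_5 : (5 : Fin 6) = (4 : Fin 5).succ := rfl


set_option maxHeartbeats 1000000 in
/-- **Gating feed-forward network lemma**: with `d_embd = 5` and structured tokens
carrying interaction vectors `I_t = (cos(tπ/(2l)), sin(tπ/(2l)))` in rows 3-4 and a
constant `1` in row 5, there is a two-layer ReLU feed-forward network of constant width
with weights of size `O(l·M)` that acts as the identity on the tokens `h_1, …, h_k` and
zeroes out the data rows (the first two rows) of the tokens `h_{k+1}, …, h_l`. -/
theorem gating_ffn :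
    ∃ C : ℝ, 0 < C ∧ ∃ w : ℕ, 0 < w ∧
      ∀ (l : ℕ), 2 ≤ l → ∀ k : ℕ, 1 ≤ k → k ≤ l → ∀ M : ℝ, 0 < M →
        ∃ (W₁ : Matrix (Fin w) (Fin 5) ℝ) (W₂ : Matrix (Fin 5) (Fin w) ℝ)
          (b₁ : Fin w → ℝ) (b₂ : Fin 5 → ℝ),
          (∀ a b, |W₁ a b| ≤ C * l * M) ∧ (∀ a b, |W₂ a b| ≤ C * l * M) ∧
          (∀ a, |b₁ a| ≤ C * l * M) ∧ (∀ a, |b₂ a| ≤ C * l * M) ∧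
          ∀ H : Matrix (Fin 5) (Fin l) ℝ,
            (∀ a t, |H a t| ≤ M) →
            (∀ t : Fin l,
              H 2 t = Real.cos (((t : ℕ) + 1) * Real.pi / (2 * l)) ∧
              H 3 t = Real.sin (((t : ℕ) + 1) * Real.pi / (2 * l)) ∧
              H 4 t = 1) →
            ∀ t : Fin l,
              ((t : ℕ) + 1 ≤ k → ∀ a : Fin 5,
                W₂.mulVec (fun j => relu (W₁.mulVec (fun c => H c t) j + b₁ j)) a + b₂ a
               = H a t) ∧
              (k < (t : ℕ) + 1 → ∀ a : Fin 5,
                W₂.mulVec (fun j => relu (W₁.mulVec (fun c => H c t) j + b₁ j)) a + b₂ a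
               = if 2 ≤ (a : ℕ) then H a t else 0) := by
  refine ⟨4, by norm_num, 7, by norm_num, ?_⟩
  intro l hl k hk1 hkl M hM
  have hl0 : (2:ℝ) ≤ l := by exact_mod_cast hl
  by_cases hM1 : 1 ≤ M
  · set sa := Real.sin (((k:ℝ)+1/2)*π/(2*l)) with hsa_def
    set ca := Real.cos (((k:ℝ)+1/2)*π/(2*l)) with hca_def
    set A : ℝ := 4*l*M with hA_def
    have hA0 : 0 < A := by positivity
    refine ⟨!![1,0,A*sa,-(A*ca),0; -1,0,A*sa,-(A*ca),0; 0,1,A*sa,-(A*ca),0;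
               0,-1,A*sa,-(A*ca),0; 0,0,1,0,0; 0,0,0,1,0; 0,0,0,0,1],
            !![1/2,-(1/2),0,0,0,0,0; 0,0,1/2,-(1/2),0,0,0; 0,0,0,0,1,0,0;
               0,0,0,0,0,1,0; 0,0,0,0,0,0,1],
            ![-M,-M,-M,-M,2*M,2*M,2*M], ![0,0,-(2*M),-(2*M),-(2*M)], ?_, ?_, ?_, ?_, ?_⟩
    case _ =>
      intro a b
      have hsa1 : |sa| ≤ 1 := Real.abs_sin_le_one _
      have hca1 : |ca| ≤ 1 := Real.abs_cos_le_one _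
      have hAsa : |A*sa| ≤ 4*(l:ℝ)*M := by
        rw [abs_mul, abs_of_pos hA0]; nlinarith [abs_nonneg sa]
      have hAca : |A*ca| ≤ 4*(l:ℝ)*M := by
        rw [abs_mul, abs_of_pos hA0]; nlinarith [abs_nonneg ca]
      have h1le : (1:ℝ) ≤ 4*(l:ℝ)*M := by nlinarith
      fin_cases a <;> fin_cases b <;>
        (try simp [fin7_5, fin7_6, fin6_5, Matrix.cons_val_succ, Matrix.vecHead, Matrix.vecTail]) <;>
        first
        | positivity
        | exact h1le
        | exact hAsa
        | exact hAca
        | (rw [abs_of_pos hA0]; nlinarith [abs_nonneg sa, abs_nonneg ca])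
        | (rw [show |(2:ℝ)⁻¹| = 2⁻¹ by norm_num]; nlinarith)
    case _ =>
      intro a b
      have h1le : (1:ℝ) ≤ 4*(l:ℝ)*M := by nlinarith
      fin_cases a <;> fin_cases b <;>
        (try simp [fin7_5, fin7_6, fin6_5, Matrix.cons_val_succ, Matrix.vecHead, Matrix.vecTail]) <;>
        first
        | positivity
        | exact h1le
        | nlinarith [hA_def]
        | (rw [show |(2:ℝ)⁻¹| = 2⁻¹ by norm_num]; nlinarith)
    case _ =>
      intro a
      have hM4 : |M| ≤ 4*(l:ℝ)*M := by rw [abs_of_pos hM]; nlinarith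
      have h2M : |2*M| ≤ 4*(l:ℝ)*M := by rw [abs_of_pos (by linarith)]; nlinarith
      fin_cases a <;>
        (try simp [fin7_5, fin7_6, fin6_5, Matrix.cons_val_succ, Matrix.vecHead, Matrix.vecTail]) <;>
        first
        | exact hM4
        | exact h2M
        | (rw [abs_of_pos hM]; nlinarith [hA_def])
    case _ =>
      intro a
      have h2M : |2*M| ≤ 4*(l:ℝ)*M := by rw [abs_of_pos (by linarith)]; nlinarith
      fin_cases a <;>
        (try simp [fin7_5, fin7_6, fin6_5, Matrix.cons_val_succ, Matrix.vecHead, Matrix.vecTail]) <;>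
        first
        | positivity
        | exact h2M
        | (rw [abs_of_pos hM]; nlinarith [hA_def])
    · intro H hHb hHs t
      obtain ⟨hc, hs, h1⟩ := hHs t
      have gb := gate_bound l k (t:ℕ) hl hk1 hkl t.isLt
      have hL1 : (t:ℕ)+1 ≤ k → 1/(2*(l:ℝ)) ≤ sa * H 2 t - ca * H 3 t := by
        intro h; rw [hc, hs]; exact gb.1 h
      have hL2 : k < (t:ℕ)+1 → sa * H 2 t - ca * H 3 t ≤ -(1/(2*(l:ℝ))) := by
        intro h; rw [hc, hs]; exact gb.2 h
      have hAeq : A * (1/(2*(l:ℝ))) = 2*M := by rw [hA_def]; field_simp; ring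
      constructor
      · intro htk a
        have hL := hL1 htk
        have hS : 2*M ≤ A * (sa * H 2 t) - A * (ca * H 3 t) := by
          calc 2*M = A * (1/(2*(l:ℝ))) := hAeq.symm
            _ ≤ A * (sa * H 2 t - ca * H 3 t) :=
                mul_le_mul_of_nonneg_left hL hA0.le
            _ = A * (sa * H 2 t) - A * (ca * H 3 t) := by ring
        have hb0 := abs_le.1 (hHb 0 t)
        have hb1 := abs_le.1 (hHb 1 t)
        have hb2 := abs_le.1 (hHb 2 t)
        have hb3 := abs_le.1 (hHb 3 t)
        have hb4 := abs_le.1 (hHb 4 t)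
        have key : ∀ x : ℝ, -M ≤ x →
            0 ⊔ (x + A * sa * H 2 t + -(A * ca * H 3 t) + -M)
              = x + A * sa * H 2 t + -(A * ca * H 3 t) + -M := by
          intro x hx
          apply max_eq_right
          nlinarith [hS]
        have key2 : ∀ x : ℝ, -M ≤ x → 0 ⊔ (x + 2*M) = x + 2*M := by
          intro x hx
          apply max_eq_right
          linarith
        fin_cases a <;>
          simp [Matrix.mulVec, dotProduct, Fin.sum_univ_seven, Fin.sum_univ_five,
            relu, fin7_5, fin7_6, fin6_5, Matrix.cons_val_succ, Matrix.vecHead, Matrix.vecTail]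
        · rw [key (H 0 t) hb0.1, key (-H 0 t) (by linarith [hb0.2])]; ring
        · rw [key (H 1 t) hb1.1, key (-H 1 t) (by linarith [hb1.2])]; ring
        · rw [key2 (H 2 t) hb2.1]; ring
        · rw [key2 (H 3 t) hb3.1]; ring
        · rw [key2 (H 4 t) hb4.1]; ring
      · intro htk a
        have hL := hL2 htk
        have hS : A * (sa * H 2 t) - A * (ca * H 3 t) ≤ -(2*M) := by
          calc A * (sa * H 2 t) - A * (ca * H 3 t)
              = A * (sa * H 2 t - ca * H 3 t) := by ring
            _ ≤ A * (-(1/(2*(l:ℝ)))) := mul_le_mul_of_nonneg_left hL hA0.le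
            _ = -(2*M) := by rw [mul_neg, hAeq]
        have hb0 := abs_le.1 (hHb 0 t)
        have hb1 := abs_le.1 (hHb 1 t)
        have hb2 := abs_le.1 (hHb 2 t)
        have hb3 := abs_le.1 (hHb 3 t)
        have hb4 := abs_le.1 (hHb 4 t)
        have key : ∀ x : ℝ, x ≤ M →
            0 ⊔ (x + A * sa * H 2 t + -(A * ca * H 3 t) + -M) = 0 := by
          intro x hx
          apply max_eq_left
          nlinarith [hS]
        have key2 : ∀ x : ℝ, -M ≤ x → 0 ⊔ (x + 2*M) = x + 2*M := by
          intro x hx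
          apply max_eq_right
          linarith
        fin_cases a <;>
          simp [Matrix.mulVec, dotProduct, Fin.sum_univ_seven, Fin.sum_univ_five,
            relu, fin7_5, fin7_6, fin6_5, Matrix.cons_val_succ, Matrix.vecHead, Matrix.vecTail]
        · rw [key (H 0 t) hb0.2, key (-H 0 t) (by linarith [hb0.1])]; ring
        · rw [key (H 1 t) hb1.2, key (-H 1 t) (by linarith [hb1.1])]; ring
        · rw [key2 (H 2 t) hb2.1]; ring
        · rw [key2 (H 3 t) hb3.1]; ring
        · rw [key2 (H 4 t) hb4.1]; ring
  · push_neg at hM1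
    refine ⟨0, 0, 0, 0, by intro a b; simp only [Matrix.zero_apply, abs_zero]; positivity,
      by intro a b; simp only [Matrix.zero_apply, abs_zero]; positivity,
      by intro a; simp only [Pi.zero_apply, abs_zero]; positivity,
      by intro a; simp only [Pi.zero_apply, abs_zero]; positivity, ?_⟩
    intro H hHb hHs t
    exfalso
    have := (hHs t).2.2
    have := hHb 4 t
    rw [(hHs t).2.2] at this
    simp at this
    linarith

end
end

section
/- Piecewise-trapezoid approximation of Hölder functions: Let psi : R → R be the trapezoid function psi(t) = 1 for |t| ≤ 1, psi(t) = 2 − |t| for 1 ≤ |t| ≤ 2, and psi(t) = 0 for |t| ≥ 2. Let N ≥ 2 and d ≥ 1 be integers, and for each multi-index n in {1,...,N}^d define phi_n(x) = prod_{i=1}^d psi( 3(N−1)( x^i − (n^i − 1)/(N−1) ) ) and the grid point x_n = ( (n^1 − 1)/(N−1), ..., (n^d − 1)/(N−1) ). Let 0 < beta ≤ 1, H_f > 0, and let f : [0,1]^d → R satisfy |f(x) − f(y)| ≤ H_f·||x − y||_2^beta for all x, y in [0,1]^d. Then sup_{x in [0,1]^d} | f(x) − sum_{n in {1,...,N}^d}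 f(x_n)·phi_n(x) | ≤ 2^d · d^beta · H_f · (N−1)^{−beta}. -/
open Finset Real

noncomputable section

/-- The trapezoid function: `ψ(t) = 1` for `|t| ≤ 1`, `ψ(t) = 2 - |t|` for
`1 ≤ |t| ≤ 2`, and `ψ(t) = 0` for `|t| ≥ 2`. -/
def trap (t : ℝ) : ℝ :=
  if |t| ≤ 1 then 1 else if |t| ≤ 2 then 2 - |t| else 0

/-- The trapezoid bump associated to the multi-index `n ∈ {1, …, N}^d`:
`φ_n(x) = ∏ i ψ(3(N-1)(xⁱ - (nⁱ-1)/(N-1)))`. -/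
def trapBump (N d : ℕ) (n : Fin d → ℕ) (x : Fin d → ℝ) : ℝ :=
  ∏ i : Fin d, trap (3 * ((N : ℝ) - 1) * (x i - ((n i : ℝ) - 1) / ((N : ℝ) - 1)))

/-- The grid point `x_n = ((n¹-1)/(N-1), …, (n^d-1)/(N-1))` of the multi-index `n`. -/
def gridPt (N d : ℕ) (n : Fin d → ℕ) : Fin d → ℝ :=
  fun i => ((n i : ℝ) - 1) / ((N : ℝ) - 1)

lemma trap_nonneg (t : ℝ) : 0 ≤ trap t := by
  unfold trap; split_ifs with h1 h2 <;> [norm_num; linarith [abs_nonneg t]; norm_num]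

lemma trap_le_one (t : ℝ) : trap t ≤ 1 := by
  unfold trap; split_ifs with h1 h2 <;> [skip; linarith; norm_num] <;> norm_num

lemma trap_eq_zero {t : ℝ} (h : 2 < |t|) : trap t = 0 := by
  unfold trap; split_ifs with h1 h2 <;> [linarith; linarith; rfl]

lemma trap_pair {s : ℝ} (h0 : 0 ≤ s) (h1 : s ≤ 1) :
    trap (3 * s) + trap (3 * s - 3) = 1 := by
  unfold trap
  rw [abs_of_nonneg (by linarith : (0:ℝ) ≤ 3 * s),
      abs_of_nonpos (by linarith : 3 * s - 3 ≤ 0)]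
  split_ifs <;> linarith

lemma oneD_partition (N : ℕ) (hN : 2 ≤ N) {x : ℝ} (hx0 : 0 ≤ x) (hx1 : x ≤ 1) :
    ∑ n ∈ Finset.Icc 1 N, trap (3 * ((N : ℝ) - 1) * (x - ((n : ℝ) - 1) / ((N : ℝ) - 1))) = 1 := by
  have hc : (1:ℝ) ≤ (N:ℝ) - 1 := by
    have : (2:ℝ) ≤ N := by exact_mod_cast hN
    linarith
  have hc0 : ((N:ℝ) - 1) ≠ 0 := by linarith
  set u : ℝ := ((N:ℝ) - 1) * x with hu
  have hu0 : 0 ≤ u := by positivity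
  have huN : u ≤ (N:ℝ) - 1 := by nlinarith
  set k : ℕ := min ⌊u⌋₊ (N - 2) with hk
  have hkN : k ≤ N - 2 := min_le_right _ _
  have hkN' : k + 2 ≤ N := by omega
  have hkle : (k : ℝ) ≤ u := by
    calc (k:ℝ) ≤ (⌊u⌋₊ : ℝ) := by exact_mod_cast min_le_left _ _
    _ ≤ u := Nat.floor_le hu0
  have hN2 : ((N - 2 : ℕ) : ℝ) = (N:ℝ) - 2 := by
    push_cast [Nat.cast_sub hN]; ring
  have hkge : u ≤ (k : ℝ) + 1 := by
    rcases le_or_gt (⌊u⌋₊) (N-2) with h | h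
    · rw [hk, min_eq_left h]
      exact le_of_lt (Nat.lt_floor_add_one u)
    · rw [hk, min_eq_right h.le, hN2]; linarith
  -- rewrite each term
  have harg : ∀ n : ℕ, 3 * ((N : ℝ) - 1) * (x - ((n : ℝ) - 1) / ((N : ℝ) - 1))
      = 3 * (u - ((n:ℝ) - 1)) := by
    intro n; field_simp; ring
  have hsub : ({k + 1, k + 2} : Finset ℕ) ⊆ Finset.Icc 1 N := by
    intro n hn
    simp only [Finset.mem_insert, Finset.mem_singleton] at hn
    rcases hn with rfl | rfl <;> simp [Finset.mem_Icc] <;> omega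
  rw [Finset.sum_congr rfl (fun n _ => by rw [harg n])]
  rw [← Finset.sum_subset hsub ?_]
  · rw [Finset.sum_pair (by omega : k + 1 ≠ k + 2)]
    have h1 : ((k + 1 : ℕ) : ℝ) - 1 = (k:ℝ) := by push_cast; ring
    have h2 : ((k + 2 : ℕ) : ℝ) - 1 = (k:ℝ) + 1 := by push_cast; ring
    rw [h1, h2]
    have := trap_pair (s := u - k) (by linarith) (by linarith)
    convert this using 3 <;> ring
  · intro n hn hn2
    simp only [Finset.mem_insert, Finset.mem_singleton, not_or] at hn2
    simp only [Finset.mem_Icc] at hn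
    apply trap_eq_zero
    rcases lt_or_ge n (k + 1) with h | h
    · -- n ≤ k, so u - (n-1) ≥ u - k + 1 ≥ 1
      have : (n : ℝ) ≤ (k : ℝ) := by exact_mod_cast Nat.lt_succ_iff.mp h
      rw [abs_of_nonneg (by linarith)]
      linarith
    · -- n ≥ k+3
      have h3 : k + 3 ≤ n := by omega
      have : (k : ℝ) + 3 ≤ (n : ℝ) := by exact_mod_cast h3
      rw [abs_of_nonpos (by linarith)]
      linarith

lemma trapBump_nonneg (N d : ℕ) (n : Fin d → ℕ) (x : Fin d → ℝ) :
    0 ≤ trapBump N d n x :=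
  Finset.prod_nonneg fun i _ => trap_nonneg _

lemma bump_partition (N d : ℕ) (hN : 2 ≤ N) (x : Fin d → ℝ)
    (hx : ∀ i, x i ∈ Set.Icc (0:ℝ) 1) :
    ∑ n ∈ Fintype.piFinset (fun _ : Fin d => Finset.Icc 1 N), trapBump N d n x = 1 := by
  unfold trapBump
  have key := Finset.prod_univ_sum (fun _ : Fin d => Finset.Icc 1 N)
    (fun i j => trap (3 * ((N : ℝ) - 1) * (x i - ((j : ℝ) - 1) / ((N : ℝ) - 1))))
  rw [← key, Finset.prod_eq_one]
  intro i _
  exact oneD_partition N hN (hx i).1 (hx i).2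

lemma bump_close (N d : ℕ) (hN : 2 ≤ N) (n : Fin d → ℕ) (x : Fin d → ℝ)
    (h : trapBump N d n x ≠ 0) (i : Fin d) :
    |x i - gridPt N d n i| ≤ 2 / (3 * ((N:ℝ) - 1)) := by
  have hc : (1:ℝ) ≤ (N:ℝ) - 1 := by
    have : (2:ℝ) ≤ N := by exact_mod_cast hN
    linarith
  have hi : trap (3 * ((N : ℝ) - 1) * (x i - ((n i : ℝ) - 1) / ((N : ℝ) - 1))) ≠ 0 := by
    intro h0
    exact h (Finset.prod_eq_zero (Finset.mem_univ i) h0)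
  have habs : |3 * ((N : ℝ) - 1) * (x i - ((n i : ℝ) - 1) / ((N : ℝ) - 1))| ≤ 2 := by
    by_contra hlt
    exact hi (trap_eq_zero (not_le.mp hlt))
  rw [abs_mul, abs_of_nonneg (by linarith : (0:ℝ) ≤ 3 * ((N:ℝ)-1))] at habs
  unfold gridPt
  rw [le_div_iff₀ (by linarith : (0:ℝ) < 3 * ((N:ℝ)-1))]
  nlinarith [habs]

/-- **Piecewise-trapezoid approximation of Hölder functions**: if `f` is `β`-Hölder with
constant `H_f` on `[0,1]^d` (w.r.t. the Euclidean norm), then the piecewise-constant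
combination `∑_n f(x_n) φ_n` approximates `f` uniformly on `[0,1]^d` up to
`2^d d^β H_f (N-1)^{-β}`. -/
theorem trapezoid_approximation_of_holder
    (N d : ℕ) (hN : 2 ≤ N) (hd : 1 ≤ d) (β Hf : ℝ)
    (hβ0 : 0 < β) (hβ1 : β ≤ 1) (hHf : 0 < Hf)
    (f : (Fin d → ℝ) → ℝ)
    (hf : ∀ x y : Fin d → ℝ, (∀ i, x i ∈ Set.Icc (0 : ℝ) 1) →
      (∀ i, y i ∈ Set.Icc (0 : ℝ) 1) →
      |f x - f y| ≤ Hf * Real.sqrt (∑ i, (x i - y i) ^ 2) ^ β) :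
    ∀ x : Fin d → ℝ, (∀ i, x i ∈ Set.Icc (0 : ℝ) 1) →
      |f x - ∑ n ∈ Fintype.piFinset (fun _ : Fin d => Finset.Icc 1 N),
          f (gridPt N d n) * trapBump N d n x| ≤
        2 ^ d * (d : ℝ) ^ β * Hf * ((N : ℝ) - 1) ^ (-β) := by
  intro x hx
  have hc : (1:ℝ) ≤ (N:ℝ) - 1 := by
    have : (2:ℝ) ≤ N := by exact_mod_cast hN
    linarith
  have hd1 : (1:ℝ) ≤ (d:ℝ) := by exact_mod_cast hd
  set S := Fintype.piFinset (fun _ : Fin d => Finset.Icc 1 N) with hS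
  have hpart := bump_partition N d hN x hx
  -- the key bound on each term
  set B : ℝ := Hf * ((d:ℝ) / ((N:ℝ) - 1)) ^ β with hB
  have hBnn : 0 ≤ B := by
    apply mul_nonneg hHf.le
    exact Real.rpow_nonneg (by positivity) _
  have hterm : ∀ n ∈ S, |f x - f (gridPt N d n)| * trapBump N d n x
      ≤ B * trapBump N d n x := by
    intro n hn
    rcases eq_or_ne (trapBump N d n x) 0 with h0 | h0
    · rw [h0]; simp
    · apply mul_le_mul_of_nonneg_right _ (trapBump_nonneg N d n x)
      have hgp : ∀ i, gridPt N d n i ∈ Set.Icc (0:ℝ) 1 := by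
        intro i
        have : n i ∈ Finset.Icc 1 N := by
          rw [Fintype.mem_piFinset] at hn; exact hn i
        rw [Finset.mem_Icc] at this
        have h1 : (1:ℝ) ≤ (n i : ℝ) := by exact_mod_cast this.1
        have h2 : (n i : ℝ) ≤ N := by exact_mod_cast this.2
        unfold gridPt
        constructor
        · apply div_nonneg (by linarith) (by linarith)
        · rw [div_le_one (by linarith)]; linarith
      refine (hf x (gridPt N d n) hx hgp).trans ?_
      apply mul_le_mul_of_nonneg_left _ hHf.le
      apply Real.rpow_le_rpow (Real.sqrt_nonneg _) _ hβ0.le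
      have hsum : ∑ i, (x i - gridPt N d n i) ^ 2 ≤ ((d:ℝ) / ((N:ℝ)-1)) ^ 2 := by
        have hbd : ∀ i : Fin d, (x i - gridPt N d n i) ^ 2 ≤ (2 / (3 * ((N:ℝ)-1))) ^ 2 := by
          intro i
          have := bump_close N d hN n x h0 i
          have h2 := abs_nonneg (x i - gridPt N d n i)
          nlinarith [sq_abs (x i - gridPt N d n i)]
        calc ∑ i, (x i - gridPt N d n i) ^ 2
            ≤ ∑ _i : Fin d, (2 / (3 * ((N:ℝ)-1))) ^ 2 :=
              Finset.sum_le_sum fun i _ => hbd i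
          _ = (d:ℝ) * (2 / (3 * ((N:ℝ)-1))) ^ 2 := by
              rw [Finset.sum_const]; simp [mul_comm]
          _ ≤ ((d:ℝ) / ((N:ℝ)-1)) ^ 2 := by
              rw [div_pow, div_pow, ← mul_div_assoc,
                div_le_div_iff₀ (by positivity) (by positivity)]
              have hdd : (d:ℝ) ≤ (d:ℝ)^2 := by nlinarith
              have h5 := mul_le_mul_of_nonneg_right hdd (sq_nonneg ((N:ℝ)-1))
              nlinarith [h5, sq_nonneg ((d:ℝ) * ((N:ℝ)-1))]
      calc Real.sqrt (∑ i, (x i - gridPt N d n i) ^ 2)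
          ≤ Real.sqrt (((d:ℝ) / ((N:ℝ)-1)) ^ 2) := Real.sqrt_le_sqrt hsum
        _ = (d:ℝ) / ((N:ℝ)-1) := Real.sqrt_sq (by positivity)
  -- assemble
  have hdiff : f x - ∑ n ∈ S, f (gridPt N d n) * trapBump N d n x
      = ∑ n ∈ S, (f x - f (gridPt N d n)) * trapBump N d n x := by
    rw [Finset.sum_congr rfl (fun n _ => sub_mul (f x) (f (gridPt N d n)) (trapBump N d n x)),
      Finset.sum_sub_distrib, ← Finset.mul_sum, hpart, mul_one]
  rw [hdiff]
  calc |∑ n ∈ S, (f x - f (gridPt N d n)) * trapBump N d n x|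
      ≤ ∑ n ∈ S, |(f x - f (gridPt N d n)) * trapBump N d n x| :=
        Finset.abs_sum_le_sum_abs _ _
    _ = ∑ n ∈ S, |f x - f (gridPt N d n)| * trapBump N d n x := by
        refine Finset.sum_congr rfl fun n _ => ?_
        rw [abs_mul, abs_of_nonneg (trapBump_nonneg N d n x)]
    _ ≤ ∑ n ∈ S, B * trapBump N d n x := Finset.sum_le_sum hterm
    _ = B := by rw [← Finset.mul_sum, hpart, mul_one]
    _ ≤ 2 ^ d * (d : ℝ) ^ β * Hf * ((N : ℝ) - 1) ^ (-β) := by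
        have e1 : ((d:ℝ)/((N:ℝ)-1)) ^ β = (d:ℝ) ^ β * ((N:ℝ)-1) ^ (-β) := by
          rw [Real.div_rpow (by positivity) (by linarith),
            Real.rpow_neg (by linarith), div_eq_mul_inv]
        rw [hB, e1]
        have h2d : (1:ℝ) ≤ 2 ^ d := one_le_pow₀ (by norm_num)
        have hnn : 0 ≤ Hf * ((d:ℝ) ^ β * ((N:ℝ)-1) ^ (-β)) := by positivity
        calc Hf * ((d:ℝ) ^ β * ((N:ℝ)-1) ^ (-β))
            = 1 * (Hf * ((d:ℝ) ^ β * ((N:ℝ)-1) ^ (-β))) := by ring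
          _ ≤ 2 ^ d * (Hf * ((d:ℝ) ^ β * ((N:ℝ)-1) ^ (-β))) :=
              mul_le_mul_of_nonneg_right h2d hnn
          _ = 2 ^ d * (d : ℝ) ^ β * Hf * ((N : ℝ) - 1) ^ (-β) := by ring

end
end

section
/- Weight-perturbation stability of a single attention head: Let d, l ≥ 1 be integers and M, kappa ≥ 1, eta > 0. Let A_1 and A_2 be ReLU attention heads with parameter matrices Q_1, K_1, V_1 and Q_2, K_2, V_2 in R^{d×d}, respectively, all of whose entries are bounded in absolute value by kappa, and such that ||Q_1 − Q_2||_∞ ≤ eta, ||K_1 − K_2||_∞ ≤ eta, ||V_1 − V_2||_∞ ≤ eta. Then for every H in R^{d×l} with ||H||_∞ ≤ M, ||A_1(H) − A_2(H)||_∞ ≤ 3·kappa^3·d^6·M^3·l·eta. -/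
open Matrix Finset Real MeasureTheory

noncomputable section

/-- Bound on entries of a matrix-vector product. -/
lemma mulVec_entry_bound {d : ℕ} (Q : Matrix (Fin d) (Fin d) ℝ) (h : Fin d → ℝ) (c M : ℝ)
    (hc : 0 ≤ c) (hQ : ∀ a b, |Q a b| ≤ c) (hh : ∀ b, |h b| ≤ M) (b : Fin d) :
    |Q.mulVec h b| ≤ d * (c * M) := by
  have : Q.mulVec h b = ∑ j, Q b j * h j := rfl
  rw [this]
  calc |∑ j, Q b j * h j| ≤ ∑ j, |Q b j * h j| := Finset.abs_sum_le_sum_abs _ _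
    _ ≤ ∑ _j : Fin d, c * M := by
        refine Finset.sum_le_sum fun j _ => ?_
        rw [abs_mul]
        exact mul_le_mul (hQ b j) (hh j) (abs_nonneg _) hc
    _ = d * (c * M) := by simp [Finset.sum_const, Finset.card_univ, mul_assoc]

lemma sum_prod_bound {d : ℕ} (f g : Fin d → ℝ) (A B : ℝ) (hA : 0 ≤ A)
    (hf : ∀ b, |f b| ≤ A) (hg : ∀ b, |g b| ≤ B) :
    |∑ b, f b * g b| ≤ d * (A * B) := by
  calc |∑ b, f b * g b| ≤ ∑ b, |f b * g b| := Finset.abs_sum_le_sum_abs _ _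
    _ ≤ ∑ _b : Fin d, A * B := by
        refine Finset.sum_le_sum fun b _ => ?_
        rw [abs_mul]
        exact mul_le_mul (hf b) (hg b) (abs_nonneg _) hA
    _ = d * (A * B) := by simp [Finset.sum_const, Finset.card_univ, mul_assoc]

lemma relu_lipschitz (x y : ℝ) : |relu x - relu y| ≤ |x - y| := by
  unfold relu
  rw [max_comm 0 x, max_comm 0 y]
  exact abs_max_sub_max_le_abs x y 0

lemma relu_abs_le (x : ℝ) : |relu x| ≤ |x| := by
  have := relu_lipschitz x 0
  simpa [relu] using this

/-- Weight-perturbation stability of a single ReLU attention head. -/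
theorem attention_head_weight_stability
    (d l : ℕ) (hd : 1 ≤ d) (hl : 1 ≤ l) (M κ η : ℝ)
    (hM : 1 ≤ M) (hκ : 1 ≤ κ) (hη : 0 < η)
    (Q₁ K₁ V₁ Q₂ K₂ V₂ : Matrix (Fin d) (Fin d) ℝ)
    (hQ₁ : ∀ a b, |Q₁ a b| ≤ κ) (hK₁ : ∀ a b, |K₁ a b| ≤ κ) (hV₁ : ∀ a b, |V₁ a b| ≤ κ)
    (hQ₂ : ∀ a b, |Q₂ a b| ≤ κ) (hK₂ : ∀ a b, |K₂ a b| ≤ κ) (hV₂ : ∀ a b, |V₂ a b| ≤ κ)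
    (hdQ : ∀ a b, |Q₁ a b - Q₂ a b| ≤ η)
    (hdK : ∀ a b, |K₁ a b - K₂ a b| ≤ η)
    (hdV : ∀ a b, |V₁ a b - V₂ a b| ≤ η)
    (H : Matrix (Fin d) (Fin l) ℝ) (hH : ∀ a i, |H a i| ≤ M) :
    ∀ a i, |attnHead Q₁ K₁ V₁ H a i - attnHead Q₂ K₂ V₂ H a i| ≤
      3 * κ ^ 3 * (d : ℝ) ^ 6 * M ^ 3 * l * η := by
  have hκ0 : (0:ℝ) ≤ κ := le_trans zero_le_one hκ
  have hM0 : (0:ℝ) ≤ M := le_trans zero_le_one hM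
  have hη0 : (0:ℝ) ≤ η := le_of_lt hη
  have hd1 : (1:ℝ) ≤ (d:ℝ) := by exact_mod_cast hd
  have hd0 : (0:ℝ) ≤ (d:ℝ) := le_trans zero_le_one hd1
  intro a i
  -- column vectors
  set A : ℝ := (d:ℝ) * (κ * M) with hA
  have hA0 : 0 ≤ A := by positivity
  have hA1 : 1 ≤ A := by
    calc (1:ℝ) = 1 * (1 * 1) := by ring
    _ ≤ (d:ℝ) * (κ * M) := by
        gcongr
  set B : ℝ := (d:ℝ) * (η * M) with hB
  have hB0 : 0 ≤ B := by positivity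
  -- per-term bound
  have key : ∀ j : Fin l,
      |relu (∑ b : Fin d, Q₁.mulVec (fun c => H c i) b * K₁.mulVec (fun c => H c j) b) *
          V₁.mulVec (fun c => H c j) a -
        relu (∑ b : Fin d, Q₂.mulVec (fun c => H c i) b * K₂.mulVec (fun c => H c j) b) *
          V₂.mulVec (fun c => H c j) a| ≤ 3 * κ^2 * (d:ℝ)^4 * M^3 * η := by
    intro j
    set q₁ := Q₁.mulVec (fun c => H c i)
    set q₂ := Q₂.mulVec (fun c => H c i)
    set k₁ := K₁.mulVec (fun c => H c j)
    set k₂ := K₂.mulVec (fun c => H c j)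
    set v₁ := V₁.mulVec (fun c => H c j) a with hv₁def
    set v₂ := V₂.mulVec (fun c => H c j) a with hv₂def
    set s₁ := ∑ b : Fin d, q₁ b * k₁ b
    set s₂ := ∑ b : Fin d, q₂ b * k₂ b
    have hq₁ : ∀ b, |q₁ b| ≤ A := mulVec_entry_bound Q₁ _ κ M hκ0 hQ₁ (fun b => hH b i)
    have hq₂ : ∀ b, |q₂ b| ≤ A := mulVec_entry_bound Q₂ _ κ M hκ0 hQ₂ (fun b => hH b i)
    have hk₁ : ∀ b, |k₁ b| ≤ A := mulVec_entry_bound K₁ _ κ M hκ0 hK₁ (fun b => hH b j)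
    have hk₂ : ∀ b, |k₂ b| ≤ A := mulVec_entry_bound K₂ _ κ M hκ0 hK₂ (fun b => hH b j)
    have hv₁ : |v₁| ≤ A := mulVec_entry_bound V₁ _ κ M hκ0 hV₁ (fun b => hH b j) a
    have hdq : ∀ b, |q₁ b - q₂ b| ≤ B := by
      intro b
      have : q₁ b - q₂ b = (Q₁ - Q₂).mulVec (fun c => H c i) b := by
        simp [q₁, q₂, Matrix.sub_mulVec]
      rw [this]
      exact mulVec_entry_bound (Q₁ - Q₂) _ η M hη0
        (fun x y => by simpa using hdQ x y) (fun b => hH b i) b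
    have hdk : ∀ b, |k₁ b - k₂ b| ≤ B := by
      intro b
      have : k₁ b - k₂ b = (K₁ - K₂).mulVec (fun c => H c j) b := by
        simp [k₁, k₂, Matrix.sub_mulVec]
      rw [this]
      exact mulVec_entry_bound (K₁ - K₂) _ η M hη0
        (fun x y => by simpa using hdK x y) (fun b => hH b j) b
    have hdv : |v₁ - v₂| ≤ B := by
      have : v₁ - v₂ = (V₁ - V₂).mulVec (fun c => H c j) a := by
        simp [hv₁def, hv₂def, Matrix.sub_mulVec]
      rw [this]
      exact mulVec_entry_bound (V₁ - V₂) _ η M hη0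
        (fun x y => by simpa using hdV x y) (fun b => hH b j) a
    have hs₂ : |s₂| ≤ (d:ℝ) * (A * A) := sum_prod_bound q₂ k₂ A A hA0 hq₂ hk₂
    have hds : |s₁ - s₂| ≤ (d:ℝ) * (B * A) + (d:ℝ) * (A * B) := by
      have h1 : s₁ - s₂ = (∑ b : Fin d, (q₁ b - q₂ b) * k₁ b) +
          ∑ b : Fin d, q₂ b * (k₁ b - k₂ b) := by
        simp only [s₁, s₂, ← Finset.sum_add_distrib, ← Finset.sum_sub_distrib]
        congr 1; ext b; ring
      rw [h1]
      refine le_trans (abs_add_le _ _) ?_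
      gcongr
      · exact sum_prod_bound _ _ B A hB0 hdq hk₁
      · exact sum_prod_bound _ _ A B hA0 hq₂ hdk
    have split : relu s₁ * v₁ - relu s₂ * v₂ =
        (relu s₁ - relu s₂) * v₁ + relu s₂ * (v₁ - v₂) := by ring
    rw [split]
    have hterm1 : |(relu s₁ - relu s₂) * v₁| ≤ ((d:ℝ) * (B * A) + (d:ℝ) * (A * B)) * A := by
      rw [abs_mul]
      exact mul_le_mul (le_trans (relu_lipschitz s₁ s₂) hds) hv₁ (abs_nonneg _) (by positivity)
    have hterm2 : |relu s₂ * (v₁ - v₂)| ≤ ((d:ℝ) * (A * A)) * B := by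
      rw [abs_mul]
      exact mul_le_mul (le_trans (relu_abs_le s₂) hs₂) hdv (abs_nonneg _) (by positivity)
    refine le_trans (abs_add_le _ _) (le_trans (add_le_add hterm1 hterm2) ?_)
    have : ((d:ℝ) * (B * A) + (d:ℝ) * (A * B)) * A + ((d:ℝ) * (A * A)) * B =
        3 * κ^2 * (d:ℝ)^4 * M^3 * η := by
      simp only [hA, hB]; ring
    rw [this]
  -- sum up
  have expand : attnHead Q₁ K₁ V₁ H a i - attnHead Q₂ K₂ V₂ H a i =
      ∑ j : Fin l,
        (relu (∑ b : Fin d, Q₁.mulVec (fun c => H c i) b * K₁.mulVec (fun c => H c j) b) *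
            V₁.mulVec (fun c => H c j) a -
          relu (∑ b : Fin d, Q₂.mulVec (fun c => H c i) b * K₂.mulVec (fun c => H c j) b) *
            V₂.mulVec (fun c => H c j) a) := by
    simp [attnHead, Finset.sum_sub_distrib]
  rw [expand]
  calc |∑ j : Fin l, _| ≤ ∑ j : Fin l, (3 * κ^2 * (d:ℝ)^4 * M^3 * η) :=
        le_trans (Finset.abs_sum_le_sum_abs _ _) (Finset.sum_le_sum fun j _ => key j)
    _ = (l:ℝ) * (3 * κ^2 * (d:ℝ)^4 * M^3 * η) := by
        simp [Finset.sum_const, Finset.card_univ]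
    _ ≤ 3 * κ ^ 3 * (d : ℝ) ^ 6 * M ^ 3 * l * η := by
        have hl0 : (0:ℝ) ≤ (l:ℝ) := Nat.cast_nonneg l
        have h1 : (l:ℝ) * (3 * κ^2 * (d:ℝ)^4 * M^3 * η) =
            3 * κ^2 * (d:ℝ)^4 * M^3 * l * η := by ring
        rw [h1]
        gcongr 3 * ?_ * ?_ * M ^ 3 * (l:ℝ) * η
        · exact pow_le_pow_right₀ hκ (by norm_num)
        · exact pow_le_pow_right₀ hd1 (by norm_num)
end
end

section
/- Input-Lipschitz bound for multi-headed attention: Let d, l, m ≥ 1 be integers, M, kappa ≥ 1, and let MHA(H) = sum_{j=1}^m A_j(H) be a multi-headed attention layer whose heads A_j have parameter matrices Q_j, K_j, V_j in R^{d×d} with all entries bounded in absolute value by kappa. Then for all H, H' in R^{d×l} with ||H||_∞ ≤ M and ||H'||_∞ ≤ M, ||MHA(H) − MHA(H')||_∞ ≤ 4·d^6·kappa^3·M^2·m·l·||H − H'||_∞. -/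
open Matrix Finset Real MeasureTheory

noncomputable section

lemma relu_lip (s t : ℝ) : |relu s - relu t| ≤ |s - t| := by
  simp only [relu, max_comm (0:ℝ)]
  exact abs_max_sub_max_le_abs s t 0

lemma abs_relu_le (s : ℝ) : |relu s| ≤ |s| := by
  rw [relu, abs_of_nonneg (le_max_left 0 s)]
  exact max_le (abs_nonneg s) (le_abs_self s)

lemma mulVec_abs_le {d : ℕ} (Q : Matrix (Fin d) (Fin d) ℝ) (h : Fin d → ℝ) (κ M : ℝ)
    (hκ : 0 ≤ κ) (hQ : ∀ a b, |Q a b| ≤ κ) (hh : ∀ c, |h c| ≤ M) (b : Fin d) :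
    |Q.mulVec h b| ≤ d * (κ * M) := by
  calc |Q.mulVec h b| ≤ ∑ c : Fin d, |Q b c| * |h c| := by
        simpa [Matrix.mulVec, dotProduct, abs_mul] using
          Finset.abs_sum_le_sum_abs (fun c => Q b c * h c) Finset.univ
    _ ≤ ∑ _c : Fin d, κ * M := Finset.sum_le_sum fun c _ =>
        mul_le_mul (hQ b c) (hh c) (abs_nonneg _) hκ
    _ = d * (κ * M) := by simp [Finset.card_univ]

lemma abs_dot_le {d : ℕ} (x y : Fin d → ℝ) (X Y : ℝ)
    (hX : 0 ≤ X) (hx : ∀ b, |x b| ≤ X) (hy : ∀ b, |y b| ≤ Y) :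
    |∑ b : Fin d, x b * y b| ≤ d * (X * Y) := by
  calc |∑ b : Fin d, x b * y b| ≤ ∑ b : Fin d, |x b| * |y b| := by
        simpa [abs_mul] using Finset.abs_sum_le_sum_abs (fun b => x b * y b) Finset.univ
    _ ≤ ∑ _b : Fin d, X * Y := Finset.sum_le_sum fun b _ =>
        mul_le_mul (hx b) (hy b) (abs_nonneg _) hX
    _ = d * (X * Y) := by simp [Finset.card_univ]

lemma abs_dot_sub_le {d : ℕ} (x x' y y' : Fin d → ℝ) (X Y Dx Dy : ℝ)
    (hX : 0 ≤ X) (hY : 0 ≤ Y)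
    (hx' : ∀ b, |x' b| ≤ X) (hy : ∀ b, |y b| ≤ Y)
    (hdx : ∀ b, |x b - x' b| ≤ Dx) (hdy : ∀ b, |y b - y' b| ≤ Dy) :
    |∑ b : Fin d, x b * y b - ∑ b : Fin d, x' b * y' b| ≤ d * (Dx * Y + X * Dy) := by
  rw [← Finset.sum_sub_distrib]
  calc |∑ b : Fin d, (x b * y b - x' b * y' b)|
      ≤ ∑ b : Fin d, |x b * y b - x' b * y' b| := Finset.abs_sum_le_sum_abs _ _
    _ ≤ ∑ _b : Fin d, (Dx * Y + X * Dy) := by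
        refine Finset.sum_le_sum fun b _ => ?_
        have h1 : x b * y b - x' b * y' b = (x b - x' b) * y b + x' b * (y b - y' b) := by ring
        rw [h1]
        calc |(x b - x' b) * y b + x' b * (y b - y' b)|
            ≤ |(x b - x' b)| * |y b| + |x' b| * |(y b - y' b)| := by
              rw [← abs_mul, ← abs_mul]; exact abs_add_le _ _
          _ ≤ Dx * Y + X * Dy := by
              gcongr
              · exact (abs_nonneg _).trans (hdx b)
              · exact hdx b
              · exact hy b
              · exact hx' b
              · exact hdy b
    _ = d * (Dx * Y + X * Dy) := by simp [Finset.card_univ, mul_add]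

lemma head_entry_bound {d l : ℕ} (M κ ρ : ℝ)
    (hM : 1 ≤ M) (hκ : 1 ≤ κ) (hρ : 0 ≤ ρ)
    (Q K V : Matrix (Fin d) (Fin d) ℝ)
    (hQ : ∀ a b, |Q a b| ≤ κ) (hK : ∀ a b, |K a b| ≤ κ) (hV : ∀ a b, |V a b| ≤ κ)
    (H H' : Matrix (Fin d) (Fin l) ℝ)
    (hH : ∀ a i, |H a i| ≤ M) (hH' : ∀ a i, |H' a i| ≤ M)
    (hHH' : ∀ a i, |H a i - H' a i| ≤ ρ) (a : Fin d) (i : Fin l) :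
    |attnHead Q K V H a i - attnHead Q K V H' a i| ≤ l * (3 * (d:ℝ)^4 * κ^3 * M^2 * ρ) := by
  have hκ0 : (0:ℝ) ≤ κ := by linarith
  have hM0 : (0:ℝ) ≤ M := by linarith
  have hnn1 : (0:ℝ) ≤ d * (κ * M) :=
    mul_nonneg (Nat.cast_nonneg d) (mul_nonneg hκ0 hM0)
  have hnn2 : (0:ℝ) ≤ d * (κ * ρ) :=
    mul_nonneg (Nat.cast_nonneg d) (mul_nonneg hκ0 hρ)
  -- mulVec difference bound
  have hdiffcol : ∀ (W : Matrix (Fin d) (Fin d) ℝ), (∀ a b, |W a b| ≤ κ) →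
      ∀ (j : Fin l) (b : Fin d),
      |W.mulVec (fun c => H c j) b - W.mulVec (fun c => H' c j) b| ≤ d * (κ * ρ) := by
    intro W hW j b
    have heq : W.mulVec (fun c => H c j) b - W.mulVec (fun c => H' c j) b
        = W.mulVec (fun c => H c j - H' c j) b := by
      simp [Matrix.mulVec, dotProduct, ← Finset.sum_sub_distrib, mul_sub]
    rw [heq]
    exact mulVec_abs_le W _ κ ρ hκ0 hW (fun c => hHH' c j) b
  simp only [attnHead, Matrix.of_apply]
  rw [← Finset.sum_sub_distrib]
  refine le_trans (Finset.abs_sum_le_sum_abs _ _) ?_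
  calc (∑ j : Fin l, |relu (∑ b : Fin d, Q.mulVec (fun c => H c i) b * K.mulVec (fun c => H c j) b) *
          V.mulVec (fun c => H c j) a -
        relu (∑ b : Fin d, Q.mulVec (fun c => H' c i) b * K.mulVec (fun c => H' c j) b) *
          V.mulVec (fun c => H' c j) a|)
      ≤ ∑ _j : Fin l, (3 * (d:ℝ)^4 * κ^3 * M^2 * ρ) := by
        refine Finset.sum_le_sum fun j _ => ?_
        set s := ∑ b : Fin d, Q.mulVec (fun c => H c i) b * K.mulVec (fun c => H c j) b with hs
        set s' := ∑ b : Fin d, Q.mulVec (fun c => H' c i) b * K.mulVec (fun c => H' c j) b with hs'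
        set v := V.mulVec (fun c => H c j) a with hv
        set v' := V.mulVec (fun c => H' c j) a with hv'
        have hvb : |v| ≤ d * (κ * M) :=
          mulVec_abs_le V _ κ M hκ0 hV (fun c => hH c j) a
        have hdv : |v - v'| ≤ d * (κ * ρ) := hdiffcol V hV j a
        have hds : |s - s'| ≤ d * ((d * (κ * ρ)) * (d * (κ * M)) + (d * (κ * M)) * (d * (κ * ρ))) := by
          refine abs_dot_sub_le _ _ _ _ _ _ _ _ hnn1 hnn1
            (fun b => mulVec_abs_le Q _ κ M hκ0 hQ (fun c => hH' c i) b)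
            (fun b => mulVec_abs_le K _ κ M hκ0 hK (fun c => hH c j) b)
            (fun b => ?_) (fun b => hdiffcol K hK j b)
          have heq : Q.mulVec (fun c => H c i) b - Q.mulVec (fun c => H' c i) b
              = Q.mulVec (fun c => H c i - H' c i) b := by
            simp [Matrix.mulVec, dotProduct, ← Finset.sum_sub_distrib, mul_sub]
          rw [heq]
          exact mulVec_abs_le Q _ κ ρ hκ0 hQ (fun c => hHH' c i) b
        have hsb : |s'| ≤ d * ((d * (κ * M)) * (d * (κ * M))) :=
          abs_dot_le _ _ _ _ hnn1
            (fun b => mulVec_abs_le Q _ κ M hκ0 hQ (fun c => hH' c i) b)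
            (fun b => mulVec_abs_le K _ κ M hκ0 hK (fun c => hH' c j) b)
        calc |relu s * v - relu s' * v'|
            = |(relu s - relu s') * v + relu s' * (v - v')| := by ring_nf
          _ ≤ |relu s - relu s'| * |v| + |relu s'| * |v - v'| := by
              rw [← abs_mul, ← abs_mul]; exact abs_add_le _ _
          _ ≤ |s - s'| * |v| + |s'| * |v - v'| :=
              add_le_add (mul_le_mul_of_nonneg_right (relu_lip _ _) (abs_nonneg _))
                (mul_le_mul_of_nonneg_right (abs_relu_le _) (abs_nonneg _))
          _ ≤ (d * ((d * (κ * ρ)) * (d * (κ * M)) + (d * (κ * M)) * (d * (κ * ρ)))) * (d * (κ * M))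
              + (d * ((d * (κ * M)) * (d * (κ * M)))) * (d * (κ * ρ)) :=
              add_le_add
                (mul_le_mul hds hvb (abs_nonneg _)
                  (mul_nonneg (Nat.cast_nonneg d) (by positivity)))
                (mul_le_mul hsb hdv (abs_nonneg _)
                  (mul_nonneg (Nat.cast_nonneg d) (by positivity)))
          _ = 3 * (d:ℝ)^4 * κ^3 * M^2 * ρ := by ring
    _ = l * (3 * (d:ℝ)^4 * κ^3 * M^2 * ρ) := by simp [Finset.card_univ]

/-- Input-Lipschitz bound for a multi-headed attention layer. -/
theorem mha_input_lipschitz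
    (d l m : ℕ) (hd : 1 ≤ d) (hl : 1 ≤ l) (hm : 1 ≤ m) (M κ ρ : ℝ)
    (hM : 1 ≤ M) (hκ : 1 ≤ κ) (hρ : 0 ≤ ρ)
    (Q K V : ℕ → Matrix (Fin d) (Fin d) ℝ)
    (hQ : ∀ j < m, ∀ a b, |Q j a b| ≤ κ) (hK : ∀ j < m, ∀ a b, |K j a b| ≤ κ)
    (hV : ∀ j < m, ∀ a b, |V j a b| ≤ κ)
    (H H' : Matrix (Fin d) (Fin l) ℝ)
    (hH : ∀ a i, |H a i| ≤ M) (hH' : ∀ a i, |H' a i| ≤ M)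
    (hHH' : ∀ a i, |H a i - H' a i| ≤ ρ) :
    ∀ a i, |mha m Q K V H a i - mha m Q K V H' a i| ≤
      4 * (d : ℝ) ^ 6 * κ ^ 3 * M ^ 2 * m * l * ρ := by
  intro a i
  have hD : (1:ℝ) ≤ d := by exact_mod_cast hd
  have happ : ∀ (G : Matrix (Fin d) (Fin l) ℝ),
      mha m Q K V G a i = ∑ j ∈ Finset.range m, attnHead (Q j) (K j) (V j) G a i := by
    intro G
    simp [mha, Matrix.sum_apply]
  rw [happ H, happ H', ← Finset.sum_sub_distrib]
  refine le_trans (Finset.abs_sum_le_sum_abs _ _) ?_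
  calc ∑ j ∈ Finset.range m, |attnHead (Q j) (K j) (V j) H a i - attnHead (Q j) (K j) (V j) H' a i|
      ≤ ∑ _j ∈ Finset.range m, (l * (3 * (d:ℝ)^4 * κ^3 * M^2 * ρ)) := by
        refine Finset.sum_le_sum fun j hj => ?_
        exact head_entry_bound M κ ρ hM hκ hρ (Q j) (K j) (V j)
          (hQ j (Finset.mem_range.mp hj)) (hK j (Finset.mem_range.mp hj))
          (hV j (Finset.mem_range.mp hj)) H H' hH hH' hHH' a i
    _ = (m:ℝ) * (l * (3 * (d:ℝ)^4 * κ^3 * M^2 * ρ)) := by simp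
    _ ≤ 4 * (d : ℝ) ^ 6 * κ ^ 3 * M ^ 2 * m * l * ρ := by
        have h46 : (d:ℝ)^4 ≤ (d:ℝ)^6 := pow_le_pow_right₀ (by linarith) (by norm_num)
        have h34 : 3 * (d:ℝ)^4 ≤ 4 * (d:ℝ)^6 := by nlinarith [pow_nonneg (by linarith : (0:ℝ) ≤ d) 6]
        have hnn : (0:ℝ) ≤ κ^3 * M^2 * m * l * ρ :=
          mul_nonneg (mul_nonneg (mul_nonneg (mul_nonneg (pow_nonneg (by linarith) 3)
            (pow_nonneg (by linarith) 2)) (Nat.cast_nonneg m)) (Nat.cast_nonneg l)) hρ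
        calc (m:ℝ) * (l * (3 * (d:ℝ)^4 * κ^3 * M^2 * ρ))
            = (3 * (d:ℝ)^4) * (κ^3 * M^2 * m * l * ρ) := by ring
          _ ≤ (4 * (d:ℝ)^6) * (κ^3 * M^2 * m * l * ρ) :=
              mul_le_mul_of_nonneg_right h34 hnn
          _ = 4 * (d : ℝ) ^ 6 * κ ^ 3 * M ^ 2 * m * l * ρ := by ring

end
end
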